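/- One-step recursion for the soft robust policy-over-options gradient (intermediate claim in the proof of Theorem 1): In the setting of the policy-over-options gradient theorem (parameterized family πΩ : ℝ → S → O → ℝ, θ-independent πo, β, K, c, w, value functions (QΩ θ, Qo θ, Qβ θ, VΩ θ) satisfying the rectangular Bellman system for each θ, differentiability of πΩ and QΩ in θ at θ₀), for all s ∈ S and ω ∈ O: ∑_p w p * deriv (θ ↦ QΩ θ s ω p) θ₀ = (∑_a πo ω s a * γ * ∑_{s'} K̄ s a s' * β ω s' * ∑_{ω'} (deriv (θ ↦ πΩ θ s' ω') θ₀) * Q̄Ω θ₀ s' ω') + ∑_{(s',ω')} Pγ θ₀ ((s,ω),(s',ω')) * (∑_{p'} w p' * deriv (θ ↦ QΩ θ s' ω' p') θ₀). -/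

import Mathlib

open scoped Classical

open Finset

variable {S O A P : Type*} [Fintype S] [Fintype O] [Fintype A] [Fintype P]

/-- The average transition kernel `K̄ s a s' = ∑ p, w p * K p s a s'`. -/
noncomputable def Kbar (w : P → ℝ) (K : P → S → A → S → ℝ) (s : S) (a : A) (s' : S) : ℝ :=
  ∑ p, w p * K p s a s'

/-- One-step discounted state–option kernel `Pγ`. -/
noncomputable def Pgam (w : P → ℝ) (K : P → S → A → S → ℝ) (γ : ℝ)
    (πo : O → S → A → ℝ) (β : O → S → ℝ) (πΩ : S → O → ℝ)
    (x y : S × O) : ℝ :=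
  ∑ a, πo x.2 x.1 a * γ * Kbar w K x.1 a y.1 *
    ((1 - β x.2 y.1) * (if y.2 = x.2 then 1 else 0) + β x.2 y.1 * πΩ y.1 y.2)

/-- k-step iterates `Pγ^k` of the one-step discounted state–option kernel. -/
noncomputable def PgamIter (w : P → ℝ) (K : P → S → A → S → ℝ) (γ : ℝ)
    (πo : O → S → A → ℝ) (β : O → S → ℝ) (πΩ : S → O → ℝ) :
    ℕ → S × O → S × O → ℝ
  | 0, x, y => if y = x then 1 else 0
  | (k + 1), x, y => ∑ z, Pgam w K γ πo β πΩ x z * PgamIter w K γ πo β πΩ k z y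

lemma pull_avg (w : P → ℝ) (K : P → S → A → S → ℝ) (γ : ℝ) (f : A → ℝ) (G : S → ℝ)
    (s : S) :
    ∑ p, w p * ∑ a, f a * (γ * ∑ s', K p s a s' * G s')
      = ∑ a, f a * γ * ∑ s', Kbar w K s a s' * G s' := by
  calc ∑ p, w p * ∑ a, f a * (γ * ∑ s', K p s a s' * G s')
      = ∑ p, ∑ a, ∑ s', w p * (f a * (γ * (K p s a s' * G s'))) := by
        simp only [Finset.mul_sum]
    _ = ∑ a, ∑ p, ∑ s', w p * (f a * (γ * (K p s a s' * G s'))) := Finset.sum_comm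
    _ = ∑ a, ∑ s', ∑ p, w p * (f a * (γ * (K p s a s' * G s'))) :=
        Finset.sum_congr rfl fun a _ => Finset.sum_comm
    _ = ∑ a, f a * γ * ∑ s', Kbar w K s a s' * G s' := by
        refine (Finset.sum_congr rfl fun a _ => ?_).symm
        simp only [Kbar, Finset.mul_sum, Finset.sum_mul]
        exact Finset.sum_congr rfl fun s' _ => Finset.sum_congr rfl fun p _ => by ring

lemma pgam_sum (w : P → ℝ) (K : P → S → A → S → ℝ) (γ : ℝ)
    (πo : O → S → A → ℝ) (β : O → S → ℝ) (π0 : S → O → ℝ) (D : S → O → ℝ)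
    (s : S) (ω : O) :
    ∑ q : S × O, Pgam w K γ πo β π0 (s, ω) q * D q.1 q.2
      = ∑ a, πo ω s a * γ * ∑ s', Kbar w K s a s' *
          ((1 - β ω s') * D s' ω + β ω s' * ∑ ω', π0 s' ω' * D s' ω') := by
  rw [Fintype.sum_prod_type]
  calc ∑ s', ∑ ω', Pgam w K γ πo β π0 (s, ω) (s', ω') * D s' ω'
      = ∑ s', ∑ ω', ∑ a, (πo ω s a * γ * Kbar w K s a s' *
          ((1 - β ω s') * (if ω' = ω then 1 else 0) + β ω s' * π0 s' ω')) * D s' ω' := by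
        simp only [Pgam, Finset.sum_mul]
    _ = ∑ s', ∑ a, ∑ ω', (πo ω s a * γ * Kbar w K s a s' *
          ((1 - β ω s') * (if ω' = ω then 1 else 0) + β ω s' * π0 s' ω')) * D s' ω' :=
        Finset.sum_congr rfl fun s' _ => Finset.sum_comm
    _ = ∑ a, ∑ s', ∑ ω', (πo ω s a * γ * Kbar w K s a s' *
          ((1 - β ω s') * (if ω' = ω then 1 else 0) + β ω s' * π0 s' ω')) * D s' ω' :=
        Finset.sum_comm
    _ = ∑ a, πo ω s a * γ * ∑ s', Kbar w K s a s' *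
          ((1 - β ω s') * D s' ω + β ω s' * ∑ ω', π0 s' ω' * D s' ω') := by
        refine Finset.sum_congr rfl fun a _ => ?_
        rw [Finset.mul_sum]
        refine Finset.sum_congr rfl fun s' _ => ?_
        have h : ∀ ω' : O, (πo ω s a * γ * Kbar w K s a s' *
              ((1 - β ω s') * (if ω' = ω then 1 else 0) + β ω s' * π0 s' ω')) * D s' ω'
            = (if ω' = ω then πo ω s a * γ * (Kbar w K s a s' * ((1 - β ω s') * D s' ω')) else 0)
              + (πo ω s a * γ * (Kbar w K s a s' * β ω s')) * (π0 s' ω' * D s' ω') := by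
          intro ω'
          by_cases hω : ω' = ω
          · simp only [hω, eq_self_iff_true, if_true]; ring
          · simp only [if_neg hω]; ring
        rw [Finset.sum_congr rfl fun ω' _ => h ω', Finset.sum_add_distrib,
          Finset.sum_ite_eq' Finset.univ ω
            (fun ω' => πo ω s a * γ * (Kbar w K s a s' * ((1 - β ω s') * D s' ω'))),
          ← Finset.mul_sum]
        simp only [Finset.mem_univ, if_true]
        ring

lemma inner_avg (w : P → ℝ) (b : ℝ) (u : P → ℝ) (dπ π0 : O → ℝ) (Q D : O → P → ℝ) :
    ∑ p', w p' * ((1 - b) * u p' + b * ∑ ω', (dπ ω' * Q ω' p' + π0 ω' * D ω' p'))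
      = b * (∑ ω', dπ ω' * ∑ p, w p * Q ω' p)
        + ((1 - b) * (∑ p, w p * u p) + b * ∑ ω', π0 ω' * ∑ p, w p * D ω' p) := by
  have h : ∀ p', w p' * ((1 - b) * u p' + b * ∑ ω', (dπ ω' * Q ω' p' + π0 ω' * D ω' p'))
      = (1 - b) * (w p' * u p')
        + ∑ ω', ((b * dπ ω') * (w p' * Q ω' p') + (b * π0 ω') * (w p' * D ω' p')) := by
    intro p'
    have e : w p' * ((1 - b) * u p' + b * ∑ ω', (dπ ω' * Q ω' p' + π0 ω' * D ω' p'))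
        = (1 - b) * (w p' * u p')
          + ∑ ω', (w p' * b) * (dπ ω' * Q ω' p' + π0 ω' * D ω' p') := by
      rw [← Finset.mul_sum]; ring
    rw [e]
    exact congrArg (fun z => (1 - b) * (w p' * u p') + z)
      (Finset.sum_congr rfl fun ω' _ => by ring)
  calc ∑ p', w p' * ((1 - b) * u p' + b * ∑ ω', (dπ ω' * Q ω' p' + π0 ω' * D ω' p'))
      = ∑ p', ((1 - b) * (w p' * u p')
          + ∑ ω', ((b * dπ ω') * (w p' * Q ω' p') + (b * π0 ω') * (w p' * D ω' p'))) :=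
        Finset.sum_congr rfl fun p' _ => h p'
    _ = (∑ p', (1 - b) * (w p' * u p'))
          + ∑ p', ∑ ω', ((b * dπ ω') * (w p' * Q ω' p') + (b * π0 ω') * (w p' * D ω' p')) :=
        Finset.sum_add_distrib
    _ = (∑ p', (1 - b) * (w p' * u p'))
          + ∑ ω', ∑ p', ((b * dπ ω') * (w p' * Q ω' p') + (b * π0 ω') * (w p' * D ω' p')) := by
        rw [Finset.sum_comm]
    _ = (∑ p', (1 - b) * (w p' * u p'))
          + ∑ ω', ((b * dπ ω') * (∑ p, w p * Q ω' p) + (b * π0 ω') * (∑ p, w p * D ω' p)) := by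
        refine congrArg _ (Finset.sum_congr rfl fun ω' _ => ?_)
        rw [Finset.sum_add_distrib, ← Finset.mul_sum, ← Finset.mul_sum]
    _ = b * (∑ ω', dπ ω' * ∑ p, w p * Q ω' p)
          + ((1 - b) * (∑ p, w p * u p) + b * ∑ ω', π0 ω' * ∑ p, w p * D ω' p) := by
        rw [Finset.sum_add_distrib, ← Finset.mul_sum]
        have e1 : b * (∑ ω', dπ ω' * ∑ p, w p * Q ω' p)
            = ∑ ω', (b * dπ ω') * (∑ p, w p * Q ω' p) := by
          rw [Finset.mul_sum]; exact Finset.sum_congr rfl fun ω' _ => by ring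
        have e2 : b * (∑ ω', π0 ω' * ∑ p, w p * D ω' p)
            = ∑ ω', (b * π0 ω') * (∑ p, w p * D ω' p) := by
          rw [Finset.mul_sum]; exact Finset.sum_congr rfl fun ω' _ => by ring
        rw [e1, e2]; ring

lemma aux_alg (γ : ℝ) (K : P → S → A → S → ℝ) (w : P → ℝ)
    (π0 : S → O → ℝ) (πo : O → S → A → ℝ) (β : O → S → ℝ)
    (Q0 dQm : S → O → P → ℝ) (dπ : S → O → ℝ)
    (hE : ∀ s ω p, dQm s ω p = ∑ a, πo ω s a * (γ * ∑ s', K p s a s' *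
      ∑ p', w p' * ((1 - β ω s') * dQm s' ω p' +
        β ω s' * ∑ ω', (dπ s' ω' * Q0 s' ω' p' + π0 s' ω' * dQm s' ω' p')))) :
    ∀ (s : S) (ω : O),
      ∑ p, w p * dQm s ω p =
        (∑ a, πo ω s a * γ * ∑ s', Kbar w K s a s' * β ω s' *
            ∑ ω', dπ s' ω' * (∑ p, w p * Q0 s' ω' p)) +
        ∑ q : S × O, Pgam w K γ πo β π0 (s, ω) q *
          (∑ p', w p' * dQm q.1 q.2 p') := by
  intro s ω
  have lhs1 : ∑ p, w p * dQm s ω p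
      = ∑ a, πo ω s a * γ * ∑ s', Kbar w K s a s' *
          ∑ p', w p' * ((1 - β ω s') * dQm s' ω p' +
            β ω s' * ∑ ω', (dπ s' ω' * Q0 s' ω' p' + π0 s' ω' * dQm s' ω' p')) :=
    (Finset.sum_congr rfl fun p _ => congrArg (fun z => w p * z) (hE s ω p)).trans
      (pull_avg w K γ (fun a => πo ω s a)
        (fun s' => ∑ p', w p' * ((1 - β ω s') * dQm s' ω p' +
          β ω s' * ∑ ω', (dπ s' ω' * Q0 s' ω' p' + π0 s' ω' * dQm s' ω' p'))) s)
  have lhs2 : ∑ p, w p * dQm s ω p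
      = ∑ a, πo ω s a * γ * ∑ s', Kbar w K s a s' *
          (β ω s' * (∑ ω', dπ s' ω' * ∑ p, w p * Q0 s' ω' p)
            + ((1 - β ω s') * (∑ p, w p * dQm s' ω p)
              + β ω s' * ∑ ω', π0 s' ω' * ∑ p, w p * dQm s' ω' p)) :=
    lhs1.trans (Finset.sum_congr rfl fun a _ => congrArg (fun z => πo ω s a * γ * z)
      (Finset.sum_congr rfl fun s' _ => congrArg (fun z => Kbar w K s a s' * z)
        (inner_avg w (β ω s') (fun p' => dQm s' ω p') (fun ω' => dπ s' ω')
          (fun ω' => π0 s' ω') (fun ω' p' => Q0 s' ω' p') (fun ω' p' => dQm s' ω' p'))))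
  have hterm2 : ∑ q : S × O, Pgam w K γ πo β π0 (s, ω) q * (∑ p', w p' * dQm q.1 q.2 p')
      = ∑ a, πo ω s a * γ * ∑ s', Kbar w K s a s' *
          ((1 - β ω s') * (∑ p, w p * dQm s' ω p)
            + β ω s' * ∑ ω', π0 s' ω' * (∑ p, w p * dQm s' ω' p)) :=
    pgam_sum w K γ πo β π0 (fun s' ω' => ∑ p, w p * dQm s' ω' p) s ω
  rw [hterm2, lhs2, ← Finset.sum_add_distrib]
  refine Finset.sum_congr rfl fun a _ => ?_
  rw [← mul_add, ← Finset.sum_add_distrib]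
  exact congrArg (fun z => πo ω s a * γ * z) (Finset.sum_congr rfl fun s' _ => by ring)

/-- One-step recursion for the soft robust policy-over-options gradient
(intermediate claim in the proof of Theorem 1). -/
theorem policy_over_options_gradient_one_step
    [Nonempty S] [Nonempty O] [Nonempty A] [Nonempty P]
    (γ : ℝ) (hγ0 : 0 ≤ γ) (hγ1 : γ < 1)
    (c : S → A → ℝ)
    (K : P → S → A → S → ℝ)
    (hK0 : ∀ p s a s', 0 ≤ K p s a s') (hK1 : ∀ p s a, ∑ s', K p s a s' = 1)
    (w : P → ℝ) (hw0 : ∀ p, 0 ≤ w p) (hw1 : ∑ p, w p = 1)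
    (πΩ : ℝ → S → O → ℝ)
    (hπΩ0 : ∀ θ s ω, 0 ≤ πΩ θ s ω) (hπΩ1 : ∀ θ s, ∑ ω, πΩ θ s ω = 1)
    (πo : O → S → A → ℝ)
    (hπo0 : ∀ ω s a, 0 ≤ πo ω s a) (hπo1 : ∀ ω s, ∑ a, πo ω s a = 1)
    (β : O → S → ℝ) (hβ0 : ∀ ω s, 0 ≤ β ω s) (hβ1 : ∀ ω s, β ω s ≤ 1)
    (QΩ : ℝ → S → O → P → ℝ) (Qo : ℝ → S → O → A → P → ℝ)
    (Qβ : ℝ → S → O → P → ℝ) (VΩ : ℝ → S → P → ℝ)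
    (hQΩ : ∀ θ s ω p, QΩ θ s ω p = ∑ a, πo ω s a * Qo θ s ω a p)
    (hQo : ∀ θ s ω a p,
      Qo θ s ω a p = c s a + γ * ∑ s', K p s a s' * (∑ p', w p' * Qβ θ s' ω p'))
    (hQβ : ∀ θ s ω p, Qβ θ s ω p = (1 - β ω s) * QΩ θ s ω p + β ω s * VΩ θ s p)
    (hVΩ : ∀ θ s p, VΩ θ s p = ∑ ω, πΩ θ s ω * QΩ θ s ω p)
    (θ₀ : ℝ)
    (hdπ : ∀ s ω, DifferentiableAt ℝ (fun θ => πΩ θ s ω) θ₀)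
    (hdQ : ∀ s ω p, DifferentiableAt ℝ (fun θ => QΩ θ s ω p) θ₀) :
    ∀ (s : S) (ω : O),
      ∑ p, w p * deriv (fun θ => QΩ θ s ω p) θ₀ =
        (∑ a, πo ω s a * γ * ∑ s', Kbar w K s a s' * β ω s' *
            ∑ ω', deriv (fun θ => πΩ θ s' ω') θ₀ * (∑ p, w p * QΩ θ₀ s' ω' p)) +
        ∑ q : S × O, Pgam w K γ πo β (πΩ θ₀) (s, ω) q *
          (∑ p', w p' * deriv (fun θ => QΩ θ q.1 q.2 p') θ₀) := by
  have hQ' : ∀ s ω p, HasDerivAt (fun θ => QΩ θ s ω p)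
      (deriv (fun θ => QΩ θ s ω p) θ₀) θ₀ := fun s ω p => (hdQ s ω p).hasDerivAt
  have hπ' : ∀ s ω, HasDerivAt (fun θ => πΩ θ s ω)
      (deriv (fun θ => πΩ θ s ω) θ₀) θ₀ := fun s ω => (hdπ s ω).hasDerivAt
  have hV' : ∀ s p, HasDerivAt (fun θ => VΩ θ s p)
      (∑ ω', (deriv (fun θ => πΩ θ s ω') θ₀ * QΩ θ₀ s ω' p
        + πΩ θ₀ s ω' * deriv (fun θ => QΩ θ s ω' p) θ₀)) θ₀ := by
    intro s p
    have hfun : (fun θ => VΩ θ s p) = fun θ => ∑ ω', πΩ θ s ω' * QΩ θ s ω' p :=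
      funext fun θ => hVΩ θ s p
    rw [hfun]
    exact HasDerivAt.fun_sum fun ω' _ => (hπ' s ω').fun_mul (hQ' s ω' p)
  have hβ' : ∀ s ω p, HasDerivAt (fun θ => Qβ θ s ω p)
      ((1 - β ω s) * deriv (fun θ => QΩ θ s ω p) θ₀
        + β ω s * ∑ ω', (deriv (fun θ => πΩ θ s ω') θ₀ * QΩ θ₀ s ω' p
          + πΩ θ₀ s ω' * deriv (fun θ => QΩ θ s ω' p) θ₀)) θ₀ := by
    intro s ω p
    have hfun : (fun θ => Qβ θ s ω p)
        = fun θ => (1 - β ω s) * QΩ θ s ω p + β ω s * VΩ θ s p :=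
      funext fun θ => hQβ θ s ω p
    rw [hfun]
    exact (HasDerivAt.const_mul _ (hQ' s ω p)).add (HasDerivAt.const_mul _ (hV' s p))
  have hE : ∀ s ω p, deriv (fun θ => QΩ θ s ω p) θ₀
      = ∑ a, πo ω s a * (γ * ∑ s', K p s a s' *
          ∑ p', w p' * ((1 - β ω s') * deriv (fun θ => QΩ θ s' ω p') θ₀ +
            β ω s' * ∑ ω', (deriv (fun θ => πΩ θ s' ω') θ₀ * QΩ θ₀ s' ω' p' +
              πΩ θ₀ s' ω' * deriv (fun θ => QΩ θ s' ω' p') θ₀))) := by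
    intro s ω p
    have hfun : (fun θ => QΩ θ s ω p)
        = fun θ => ∑ a, πo ω s a *
            (c s a + γ * ∑ s', K p s a s' * (∑ p', w p' * Qβ θ s' ω p')) := by
      funext θ
      rw [hQΩ θ s ω p]
      exact Finset.sum_congr rfl fun a _ => by rw [hQo θ s ω a p]
    have hD : HasDerivAt (fun θ => QΩ θ s ω p)
        (∑ a, πo ω s a * (γ * ∑ s', K p s a s' *
          ∑ p', w p' * ((1 - β ω s') * deriv (fun θ => QΩ θ s' ω p') θ₀ +
            β ω s' * ∑ ω', (deriv (fun θ => πΩ θ s' ω') θ₀ * QΩ θ₀ s' ω' p' +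
              πΩ θ₀ s' ω' * deriv (fun θ => QΩ θ s' ω' p') θ₀)))) θ₀ := by
      rw [hfun]
      refine HasDerivAt.fun_sum fun a _ => HasDerivAt.const_mul _ ?_
      refine HasDerivAt.const_add _ ?_
      refine HasDerivAt.const_mul _ ?_
      refine HasDerivAt.fun_sum fun s' _ => HasDerivAt.const_mul _ ?_
      refine HasDerivAt.fun_sum fun p' _ => HasDerivAt.const_mul _ ?_
      exact hβ' s' ω p'
    exact (hQ' s ω p).unique hD
  exact aux_alg γ K w (πΩ θ₀) πo β (fun s ω p => QΩ θ₀ s ω p)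
    (fun s ω p => deriv (fun θ => QΩ θ s ω p) θ₀)
    (fun s ω => deriv (fun θ => πΩ θ s ω) θ₀) hE
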